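/- For every ε > 0 and every δ > 0 there exists a positive integer N such that for every n ≥ N there exists a simple graph G on n vertices whose independence number is at most δn, whose edge set can be partitioned into two sets E₁ and E₂ such that (V(G), E₁) contains no clique on 3 vertices and (V(G), E₂) contains no clique on 6 vertices, and which has at least (5/12 − ε)·n² edges. -/

import Mathlib

open Finset

namespace RT36


lemma filter_mem_univ {D : Type*} [Fintype D] [DecidableEq D] (T : Finset D) :
    univ.filter (fun e => e ∈ T) = T := by
  ext e; simp

/-- Counting functions with constraints on a set of coordinates. -/
lemma cnt {k : ℕ} {D : Type*} [Fintype D] [DecidableEq D] (T : Finset D) (V : Finset (Fin k)) :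
    ((univ : Finset (D → Fin k)).filter (fun ω => ∀ e ∈ T, ω e ∈ V)).card
      = V.card ^ T.card * k ^ (Fintype.card D - T.card) := by
  classical
  have h1 : ((univ : Finset (D → Fin k)).filter (fun ω => ∀ e ∈ T, ω e ∈ V)).card
      = ∑ ω : D → Fin k, ∏ e : D, (if e ∈ T then (if ω e ∈ V then 1 else 0) else 1) := by
    rw [card_filter]
    refine Finset.sum_congr rfl (fun ω _ => ?_)
    rw [prod_ite, prod_const_one, mul_one]
    simp only [prod_boole, filter_mem_univ]
    congr
  rw [h1]
  have h2 : ∑ ω : D → Fin k, ∏ e : D, (if e ∈ T then (if ω e ∈ V then 1 else 0) else 1)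
      = ∏ e : D, ∑ v : Fin k, (if e ∈ T then (if v ∈ V then 1 else 0) else 1) := by
    rw [Finset.prod_univ_sum (fun _ => (univ : Finset (Fin k)))]
    rw [← Fintype.piFinset_univ]
  rw [h2]
  have h3 : ∀ e : D, (∑ v : Fin k, (if e ∈ T then (if v ∈ V then 1 else 0) else 1))
      = if e ∈ T then V.card else k := by
    intro e
    by_cases he : e ∈ T <;> simp [he, Finset.card_filter, Fintype.card_fin]
  rw [Finset.prod_congr rfl (fun e _ => h3 e), prod_ite, prod_const, prod_const,
    filter_mem_univ]
  have hcard : #(filter (fun x => x ∉ T) univ) = Fintype.card D - #T := by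
    rw [Finset.filter_not, Finset.card_sdiff_of_subset (filter_subset _ _), filter_mem_univ,
      Finset.card_univ]
  rw [hcard]



variable {m k : ℕ} [NeZero k]

/-- ordered pairs of a finset -/
def pairs (S : Finset (Fin m)) : Finset (Fin m × Fin m) :=
  (S ×ˢ S).filter (fun p => p.1 < p.2)

lemma mem_pairs {S : Finset (Fin m)} {e : Fin m × Fin m} :
    e ∈ pairs S ↔ e.1 ∈ S ∧ e.2 ∈ S ∧ e.1 < e.2 := by
  simp [pairs, and_assoc]

lemma pairs_card (S : Finset (Fin m)) :
    2 * (pairs S).card = S.card * S.card - S.card := by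
  classical
  have hswap : ((S ×ˢ S).filter (fun p => p.1 < p.2)).card
      = ((S ×ˢ S).filter (fun p => p.2 < p.1)).card := by
    apply Finset.card_bij (fun p _ => p.swap)
    · intro p hp
      simp only [mem_filter, mem_product] at hp ⊢
      exact ⟨⟨hp.1.2, hp.1.1⟩, hp.2⟩
    · intro p hp q hq h
      exact Prod.swap_injective h
    · intro p hp
      simp only [mem_filter, mem_product] at hp
      exact ⟨p.swap, by simp [mem_filter, mem_product, hp.1.1, hp.1.2, hp.2], by simp⟩
  have hunion : (S ×ˢ S).filter (fun p => p.1 < p.2) ∪ (S ×ˢ S).filter (fun p => p.2 < p.1)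
      = S.offDiag := by
    ext p
    simp only [mem_union, mem_filter, mem_product, Finset.mem_offDiag]
    constructor
    · rintro (⟨⟨h1, h2⟩, h3⟩ | ⟨⟨h1, h2⟩, h3⟩)
      · exact ⟨h1, h2, ne_of_lt h3⟩
      · exact ⟨h1, h2, (ne_of_lt h3).symm⟩
    · rintro ⟨h1, h2, h3⟩
      rcases lt_or_gt_of_ne h3 with h | h
      · exact Or.inl ⟨⟨h1, h2⟩, h⟩
      · exact Or.inr ⟨⟨h1, h2⟩, h⟩
  have hdisj : Disjoint ((S ×ˢ S).filter (fun p => p.1 < p.2))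
      ((S ×ˢ S).filter (fun p => p.2 < p.1)) := by
    rw [Finset.disjoint_left]
    intro p hp hq
    simp only [mem_filter] at hp hq
    exact absurd hq.2 (not_lt.2 (le_of_lt hp.2))
  have hcard := Finset.card_union_of_disjoint hdisj
  rw [hunion] at hcard
  rw [Finset.offDiag_card] at hcard
  unfold pairs
  omega

/-- canonical ordered pair -/
def pr (x y : Fin m) : Fin m × Fin m := if x < y then (x, y) else (y, x)

lemma pr_symm (x y : Fin m) : pr x y = pr y x := by
  unfold pr
  rcases lt_trichotomy x y with h | h | h
  · rw [if_pos h, if_neg (not_lt.2 (le_of_lt h))]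
  · simp [h]
  · rw [if_neg (not_lt.2 (le_of_lt h)), if_pos h]

lemma pr_lt {x y : Fin m} (h : x < y) : pr x y = (x, y) := if_pos h

/-- the random graph -/
def Gw (ω : (Fin m × Fin m) → Fin k) : SimpleGraph (Fin m) where
  Adj x y := x ≠ y ∧ ω (pr x y) = 0
  symm := by
    constructor
    intro x y ⟨h1, h2⟩
    exact ⟨h1.symm, by rwa [pr_symm]⟩
  loopless := by constructor; intro x ⟨h1, _⟩; exact h1 rfl

instance (ω : (Fin m × Fin m) → Fin k) : DecidableRel (Gw ω).Adj :=
  fun _ _ => instDecidableAnd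

lemma clique_iff_pairs (ω : (Fin m × Fin m) → Fin k) (S : Finset (Fin m)) :
    (∀ x ∈ S, ∀ y ∈ S, x ≠ y → (Gw ω).Adj x y) ↔ (∀ e ∈ pairs S, ω e = 0) := by
  constructor
  · intro h e he
    rw [mem_pairs] at he
    obtain ⟨h1, h2, h3⟩ := he
    have := h e.1 h1 e.2 h2 (ne_of_lt h3)
    rw [Gw] at this
    obtain ⟨-, h0⟩ := this
    rwa [pr_lt h3] at h0
  · intro h x hx y hy hxy
    rcases lt_or_gt_of_ne hxy with hlt | hgt
    · refine ⟨hxy, ?_⟩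
      have := h (x, y) (mem_pairs.2 ⟨hx, hy, hlt⟩)
      rwa [pr_lt hlt]
    · refine ⟨hxy, ?_⟩
      have := h (y, x) (mem_pairs.2 ⟨hy, hx, hgt⟩)
      rw [pr_symm, pr_lt hgt]
      exact this

/-- number of triangles (as 3-subsets spanning cliques) -/
def triCount (G : SimpleGraph (Fin m)) [DecidableRel G.Adj] : ℕ :=
  (((univ : Finset (Fin m)).powersetCard 3).filter
    (fun S => ∀ x ∈ S, ∀ y ∈ S, x ≠ y → G.Adj x y)).card

lemma sum_triCount (hm : 3 ≤ m) :
    ∑ ω : (Fin m × Fin m) → Fin k, triCount (Gw ω)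
      = m.choose 3 * k ^ (m * m - 3) := by
  classical
  have h1 : ∀ ω : (Fin m × Fin m) → Fin k, triCount (Gw ω)
      = ∑ S ∈ (univ : Finset (Fin m)).powersetCard 3,
          if ∀ e ∈ pairs S, ω e = 0 then 1 else 0 := by
    intro ω
    rw [triCount, card_filter]
    refine Finset.sum_congr rfl (fun S _ => ?_)
    rw [if_congr (clique_iff_pairs ω S) rfl rfl]
  calc ∑ ω : (Fin m × Fin m) → Fin k, triCount (Gw ω)
      = ∑ ω : (Fin m × Fin m) → Fin k, ∑ S ∈ (univ : Finset (Fin m)).powersetCard 3,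
          if ∀ e ∈ pairs S, ω e = 0 then 1 else 0 := Finset.sum_congr rfl (fun ω _ => h1 ω)
    _ = ∑ S ∈ (univ : Finset (Fin m)).powersetCard 3, ∑ ω : (Fin m × Fin m) → Fin k,
          if ∀ e ∈ pairs S, ω e = 0 then 1 else 0 := Finset.sum_comm
    _ = m.choose 3 * k ^ (m * m - 3) := by
        have hS : ∀ S ∈ (univ : Finset (Fin m)).powersetCard 3,
            (∑ ω : (Fin m × Fin m) → Fin k, if ∀ e ∈ pairs S, ω e = 0 then 1 else 0)
              = k ^ (m * m - 3) := by
          intro S hS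
          rw [mem_powersetCard] at hS
          have hpc : (pairs S).card = 3 := by
            have := pairs_card S
            rw [hS.2] at this
            omega
          rw [← card_filter]
          have := cnt (k := k) (pairs S) {0}
          simp only [Finset.card_singleton, one_pow, one_mul] at this
          have hmem : ∀ ω : (Fin m × Fin m) → Fin k,
              (∀ e ∈ pairs S, ω e = 0) ↔ (∀ e ∈ pairs S, ω e ∈ ({0} : Finset (Fin k))) := by
            intro ω
            simp
          rw [filter_congr (fun ω _ => hmem ω)]
          rw [this, hpc]
          congr 1
          rw [Fintype.card_prod, Fintype.card_fin]
        rw [Finset.sum_congr rfl hS, Finset.sum_const, Finset.card_powersetCard,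
          Finset.card_univ, Fintype.card_fin, smul_eq_mul]


/-- number of independent a-subsets -/
def indCount (ω : (Fin m × Fin m) → Fin k) (a : ℕ) : ℕ :=
  (((univ : Finset (Fin m)).powersetCard a).filter
    (fun S => ∀ e ∈ pairs S, ω e ≠ 0)).card

lemma sum_indCount (a Ca : ℕ) (hCa : 2 * Ca = a * a - a) :
    ∑ ω : (Fin m × Fin m) → Fin k, indCount ω a
      = m.choose a * ((k-1) ^ Ca * k ^ (m * m - Ca)) := by
  classical
  calc ∑ ω : (Fin m × Fin m) → Fin k, indCount ω a
      = ∑ S ∈ (univ : Finset (Fin m)).powersetCard a, ∑ ω : (Fin m × Fin m) → Fin k,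
          if ∀ e ∈ pairs S, ω e ≠ 0 then 1 else 0 := by
        rw [← Finset.sum_comm]
        exact Finset.sum_congr rfl (fun ω _ => by rw [indCount, card_filter])
    _ = m.choose a * ((k-1) ^ Ca * k ^ (m * m - Ca)) := by
        have hS : ∀ S ∈ (univ : Finset (Fin m)).powersetCard a,
            (∑ ω : (Fin m × Fin m) → Fin k, if ∀ e ∈ pairs S, ω e ≠ 0 then 1 else 0)
              = (k-1) ^ Ca * k ^ (m * m - Ca) := by
          intro S hSm
          rw [mem_powersetCard] at hSm
          have hpc : (pairs S).card = Ca := by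
            have := pairs_card S
            rw [hSm.2] at this
            omega
          rw [← card_filter]
          have hcnt := cnt (k := k) (pairs S) (Finset.univ.erase 0)
          have hmem : ∀ ω : (Fin m × Fin m) → Fin k,
              (∀ e ∈ pairs S, ω e ≠ 0) ↔
                (∀ e ∈ pairs S, ω e ∈ (Finset.univ.erase (0 : Fin k))) := by
            intro ω
            simp [Finset.mem_erase]
          rw [filter_congr (fun ω _ => hmem ω), hcnt, hpc]
          congr 2
          · rw [Finset.card_erase_of_mem (mem_univ _), Finset.card_univ, Fintype.card_fin]
          · rw [Fintype.card_prod, Fintype.card_fin]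
        rw [Finset.sum_congr rfl hS, Finset.sum_const, Finset.card_powersetCard,
          Finset.card_univ, Fintype.card_fin, smul_eq_mul]

lemma exists_good (a Ca : ℕ) (hk : 2 ≤ k) (hm : 3 ≤ m) (ha : 2 ≤ a)
    (hCa : 2 * Ca = a * a - a) (hCaN : Ca ≤ m * m)
    (hb1 : 24 * m.choose 3 ≤ (m / 2) * k ^ 3)
    (hb2 : 4 * (m.choose a * (k-1) ^ Ca) ≤ k ^ Ca) :
    ∃ ω : (Fin m × Fin m) → Fin k, triCount (Gw ω) < m / 2 ∧
      ∀ S : Finset (Fin m),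
        (∀ x ∈ S, ∀ y ∈ S, x ≠ y → ¬ (Gw ω).Adj x y) → S.card < a := by
  classical
  have hkpos : 0 < k := by omega
  have hmm : m ≤ m * m := Nat.le_mul_of_pos_left m (by omega)
  have hN3 : 3 ≤ m * m := le_trans hm hmm
  have hkN : 0 < k ^ (m * m) := pow_pos hkpos _
  have hm2 : 0 < m / 2 := by omega
  have hcardU : (univ : Finset ((Fin m × Fin m) → Fin k)).card = k ^ (m * m) := by
    rw [Finset.card_univ, Fintype.card_fun, Fintype.card_prod, Fintype.card_fin,
      Fintype.card_fin]
  set B1 := filter (fun ω : (Fin m × Fin m) → Fin k => m / 2 ≤ triCount (Gw ω)) univ with hB1def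
  set B2 := filter (fun ω : (Fin m × Fin m) → Fin k => 0 < indCount ω a) univ with hB2def
  have hB1 : B1.card * (m / 2) ≤ m.choose 3 * k ^ (m * m - 3) := by
    have h1 : B1.card • (m / 2) ≤ ∑ ω ∈ B1, triCount (Gw ω) :=
      Finset.card_nsmul_le_sum B1 _ _ (fun ω hω => (mem_filter.1 hω).2)
    have h2 : ∑ ω ∈ B1, triCount (Gw ω) ≤ ∑ ω : (Fin m × Fin m) → Fin k, triCount (Gw ω) :=
      Finset.sum_le_sum_of_subset (subset_univ B1)
    rw [sum_triCount hm] at h2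
    simpa [smul_eq_mul] using le_trans h1 h2
  have h24 : 24 * B1.card ≤ k ^ (m * m) := by
    have step : 24 * (m.choose 3 * k ^ (m * m - 3)) ≤ (m / 2) * k ^ (m * m) := by
      have : 24 * m.choose 3 * k ^ (m * m - 3) ≤ ((m / 2) * k ^ 3) * k ^ (m * m - 3) :=
        Nat.mul_le_mul_right _ hb1
      calc 24 * (m.choose 3 * k ^ (m * m - 3)) = 24 * m.choose 3 * k ^ (m * m - 3) := by ring
        _ ≤ ((m / 2) * k ^ 3) * k ^ (m * m - 3) := this
        _ = (m / 2) * (k ^ 3 * k ^ (m * m - 3)) := by ring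
        _ = (m / 2) * k ^ (m * m) := by rw [← pow_add, Nat.add_sub_cancel' hN3]
    have hchain : (m / 2) * (24 * B1.card) ≤ (m / 2) * k ^ (m * m) := by
      calc (m / 2) * (24 * B1.card) = 24 * (B1.card * (m / 2)) := by ring
        _ ≤ 24 * (m.choose 3 * k ^ (m * m - 3)) := Nat.mul_le_mul_left _ hB1
        _ ≤ (m / 2) * k ^ (m * m) := step
    exact Nat.le_of_mul_le_mul_left hchain hm2
  have hB2 : B2.card ≤ m.choose a * ((k - 1) ^ Ca * k ^ (m * m - Ca)) := by
    have h1 : B2.card • 1 ≤ ∑ ω ∈ B2, indCount ω a :=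
      Finset.card_nsmul_le_sum B2 _ _ (fun ω hω => (mem_filter.1 hω).2)
    have h2 : ∑ ω ∈ B2, indCount ω a ≤ ∑ ω : (Fin m × Fin m) → Fin k, indCount ω a :=
      Finset.sum_le_sum_of_subset (subset_univ B2)
    rw [sum_indCount a Ca hCa] at h2
    simpa [smul_eq_mul] using le_trans h1 h2
  have h4 : 4 * B2.card ≤ k ^ (m * m) := by
    calc 4 * B2.card ≤ 4 * (m.choose a * ((k - 1) ^ Ca * k ^ (m * m - Ca))) :=
          Nat.mul_le_mul_left _ hB2
      _ = (4 * (m.choose a * (k - 1) ^ Ca)) * k ^ (m * m - Ca) := by ring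
      _ ≤ k ^ Ca * k ^ (m * m - Ca) := Nat.mul_le_mul_right _ hb2
      _ = k ^ (m * m) := by rw [← pow_add, Nat.add_sub_cancel' hCaN]
  have hlt : (B1 ∪ B2).card < k ^ (m * m) := by
    have hu : (B1 ∪ B2).card ≤ B1.card + B2.card := Finset.card_union_le B1 B2
    have : 24 * (B1 ∪ B2).card < 24 * k ^ (m * m) := by
      calc 24 * (B1 ∪ B2).card ≤ 24 * (B1.card + B2.card) := Nat.mul_le_mul_left _ hu
        _ = 24 * B1.card + 6 * (4 * B2.card) := by ring
        _ ≤ k ^ (m * m) + 6 * k ^ (m * m) := Nat.add_le_add h24 (Nat.mul_le_mul_left _ h4)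
        _ = 7 * k ^ (m * m) := by ring
        _ < 24 * k ^ (m * m) := by
            have := hkN
            nlinarith
    exact Nat.lt_of_mul_lt_mul_left this
  obtain ⟨ω, hω⟩ : ∃ ω, ω ∉ B1 ∪ B2 := by
    by_contra h
    push_neg at h
    have hsub : (univ : Finset ((Fin m × Fin m) → Fin k)) ⊆ B1 ∪ B2 := fun ω _ => h ω
    have := Finset.card_le_card hsub
    rw [hcardU] at this
    exact (not_le.2 hlt) this
  refine ⟨ω, ?_, ?_⟩
  · have h1 : ω ∉ B1 := fun h => hω (mem_union_left _ h)
    rw [hB1def, mem_filter] at h1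
    push_neg at h1
    exact h1 (mem_univ ω)
  · intro S hS
    by_contra hge
    push_neg at hge
    obtain ⟨T, hTS, hTcard⟩ := Finset.exists_subset_card_eq hge
    have hT : ∀ e ∈ pairs T, ω e ≠ 0 := by
      intro e he h0
      rw [mem_pairs] at he
      obtain ⟨h1, h2, h3⟩ := he
      have hne : e.1 ≠ e.2 := ne_of_lt h3
      refine hS e.1 (hTS h1) e.2 (hTS h2) hne ⟨hne, ?_⟩
      rw [pr_lt h3, Prod.mk.eta]
      exact h0
    have hmemT : T ∈ ((univ : Finset (Fin m)).powersetCard a).filter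
        (fun S => ∀ e ∈ pairs S, ω e ≠ 0) :=
      mem_filter.2 ⟨mem_powersetCard.2 ⟨subset_univ T, hTcard⟩, hT⟩
    have hpos : 0 < indCount ω a := by
      rw [indCount]
      exact Finset.card_pos.2 ⟨T, hmemT⟩
    exact hω (mem_union_right _ (mem_filter.2 ⟨mem_univ _, hpos⟩))

lemma deletion_aux (n : ℕ) : ∀ (G : SimpleGraph (Fin m)) [DecidableRel G.Adj],
    triCount G ≤ n → ∃ W : Finset (Fin m), m ≤ W.card + triCount G ∧
      ∀ x ∈ W, ∀ y ∈ W, ∀ z ∈ W, x ≠ y → x ≠ z → y ≠ z →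
        ¬(G.Adj x y ∧ G.Adj x z ∧ G.Adj y z) := by
  induction n with
  | zero =>
    intro G inst h0
    refine ⟨univ, by simpa using Nat.le_add_right m _, ?_⟩
    intro x _ y _ z _ hxy hxz hyz ⟨h1, h2, h3⟩
    have hS : ({x, y, z} : Finset (Fin m)) ∈ ((univ : Finset (Fin m)).powersetCard 3).filter
        (fun S => ∀ u ∈ S, ∀ v ∈ S, u ≠ v → G.Adj u v) := by
      refine mem_filter.2 ⟨mem_powersetCard.2 ⟨subset_univ _, ?_⟩, ?_⟩
      · exact Finset.card_eq_three.2 ⟨x, y, z, hxy, hxz, hyz, rfl⟩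
      · intro u hu v hv huv
        simp only [Finset.mem_insert, Finset.mem_singleton] at hu hv
        rcases hu with rfl | rfl | rfl <;> rcases hv with rfl | rfl | rfl <;>
          first
            | exact absurd rfl huv
            | assumption
            | exact h1.symm
            | exact h2.symm
            | exact h3.symm
    have : 0 < triCount G := Finset.card_pos.2 ⟨_, hS⟩
    omega
  | succ n ih =>
    intro G inst hle
    by_cases hn : triCount G ≤ n
    · exact ih G hn
    · -- there is a triangle
      have hpos : 0 < triCount G := by omega
      obtain ⟨S, hS⟩ := Finset.card_pos.1 hpos
      have hSf := Finset.mem_filter.1 hS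
      have hScard := (mem_powersetCard.1 hSf.1).2
      obtain ⟨x, y, z, hxy, hxz, hyz, rfl⟩ := Finset.card_eq_three.1 hScard
      let G' : SimpleGraph (Fin m) :=
        { Adj := fun u v => G.Adj u v ∧ u ≠ x ∧ v ≠ x
          symm := by constructor; intro u v ⟨h1, h2, h3⟩; exact ⟨h1.symm, h3, h2⟩
          loopless := by constructor; intro u ⟨h1, _, _⟩; exact G.irrefl h1 }
      haveI instG' : DecidableRel G'.Adj :=
        fun u v => decidable_of_iff (G.Adj u v ∧ u ≠ x ∧ v ≠ x) Iff.rfl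
      have hsub : ((univ : Finset (Fin m)).powersetCard 3).filter
            (fun T => ∀ u ∈ T, ∀ v ∈ T, u ≠ v → G'.Adj u v)
          ⊆ (((univ : Finset (Fin m)).powersetCard 3).filter
            (fun T => ∀ u ∈ T, ∀ v ∈ T, u ≠ v → G.Adj u v)).erase {x, y, z} := by
        intro T hT
        have hTf := Finset.mem_filter.1 hT
        refine Finset.mem_erase.2 ⟨?_, Finset.mem_filter.2 ⟨hTf.1,
          fun u hu v hv huv => (hTf.2 u hu v hv huv).1⟩⟩
        intro hTeq
        have hxT : x ∈ T := by rw [hTeq]; exact Finset.mem_insert_self x _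
        have hyT : y ∈ T := by rw [hTeq]; simp
        have := hTf.2 x hxT y hyT hxy
        exact this.2.1 rfl
      have htri_eq : triCount G = #(((univ : Finset (Fin m)).powersetCard 3).filter
            (fun T => ∀ u ∈ T, ∀ v ∈ T, u ≠ v → G.Adj u v)) := rfl
      have htri_eq' : triCount G' = #(((univ : Finset (Fin m)).powersetCard 3).filter
            (fun T => ∀ u ∈ T, ∀ v ∈ T, u ≠ v → G'.Adj u v)) := rfl
      have htri' : triCount G' ≤ n := by
        have h1 := Finset.card_le_card hsub
        rw [Finset.card_erase_of_mem hS] at h1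
        rw [htri_eq', ← htri_eq] at *
        omega
      obtain ⟨W', hW1, hW2⟩ := ih G' htri'
      refine ⟨W'.erase x, ?_, ?_⟩
      · have h1 := Finset.card_erase_le (s := W') (a := x)
        have h2 : W'.card - 1 ≤ (W'.erase x).card := Finset.pred_card_le_card_erase
        omega
      · intro u hu v hv w hw huv huw hvw ⟨h1, h2, h3⟩
        have hux := Finset.mem_erase.1 hu
        have hvx := Finset.mem_erase.1 hv
        have hwx := Finset.mem_erase.1 hw
        exact hW2 u hux.2 v hvx.2 w hwx.2 huv huw hvw
          ⟨⟨h1, hux.1, hvx.1⟩, ⟨h2, hux.1, hwx.1⟩, ⟨h3, hvx.1, hwx.1⟩⟩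

/-- Abstract gadget: a triangle-free graph on `Fin s₀`, `s₀ > m/2`, with independence < a. -/
lemma gadget_abstract (a Ca : ℕ) (hk : 2 ≤ k) (hm : 3 ≤ m) (ha : 2 ≤ a)
    (hCa : 2 * Ca = a * a - a) (hCaN : Ca ≤ m * m)
    (hb1 : 24 * m.choose 3 ≤ (m / 2) * k ^ 3)
    (hb2 : 4 * (m.choose a * (k-1) ^ Ca) ≤ k ^ Ca) :
    ∃ s₀ : ℕ, m / 2 ≤ s₀ ∧ ∃ H : SimpleGraph (Fin s₀),
      (∀ x y z : Fin s₀, x ≠ y → x ≠ z → y ≠ z → ¬(H.Adj x y ∧ H.Adj x z ∧ H.Adj y z)) ∧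
      (∀ S : Finset (Fin s₀), (∀ u ∈ S, ∀ v ∈ S, u ≠ v → ¬H.Adj u v) → S.card < a) := by
  classical
  obtain ⟨ω, htri, hind⟩ := exists_good (m := m) (k := k) a Ca hk hm ha hCa hCaN hb1 hb2
  obtain ⟨W, hW1, hW2⟩ := deletion_aux (m := m) (triCount (Gw ω)) (Gw ω) le_rfl
  refine ⟨W.card, by omega, ?_⟩
  set emb := W.orderEmbOfFin (rfl : W.card = W.card) with hemb
  have hembW : ∀ i, emb i ∈ W := fun i => Finset.orderEmbOfFin_mem W rfl i
  refine ⟨{ Adj := fun i j => (Gw ω).Adj (emb i) (emb j)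
            symm := ⟨fun i j h => (Gw ω).adj_symm h⟩
            loopless := ⟨fun i h => (Gw ω).irrefl h⟩ }, ?_, ?_⟩
  · intro x y z hxy hxz hyz ⟨h1, h2, h3⟩
    have hne : ∀ {i j : Fin W.card}, i ≠ j → emb i ≠ emb j := by
      intro i j hij heq
      exact hij (emb.injective heq)
    exact hW2 (emb x) (hembW x) (emb y) (hembW y) (emb z) (hembW z)
      (hne hxy) (hne hxz) (hne hyz) ⟨h1, h2, h3⟩
  · intro S hS
    have himg : ∀ u ∈ S.image emb, ∀ v ∈ S.image emb, u ≠ v → ¬(Gw ω).Adj u v := by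
      intro u hu v hv huv
      obtain ⟨i, hi, rfl⟩ := Finset.mem_image.1 hu
      obtain ⟨j, hj, rfl⟩ := Finset.mem_image.1 hv
      have hij : i ≠ j := fun h => huv (by rw [h])
      exact hS i hi j hj hij
    have := hind (S.image emb) himg
    rwa [Finset.card_image_of_injective S emb.injective] at this

lemma bernoulli_nat {k : ℕ} (hk : 2 ≤ k) : 2 * (k-1)^k ≤ k^k := by
  have hpos : (0:ℚ) < (k:ℚ) - 1 := by
    have : (2:ℚ) ≤ (k:ℚ) := by exact_mod_cast hk
    linarith
  have hnn : (0:ℚ) ≤ 1/((k:ℚ)-1) := le_of_lt (div_pos one_pos hpos)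
  have hb := one_add_mul_le_pow (by linarith : (-2:ℚ) ≤ 1/((k:ℚ)-1)) k
  have h2 : (2:ℚ) ≤ 1 + (k:ℚ) * (1/((k:ℚ)-1)) := by
    have h1 : (1:ℚ) ≤ (k:ℚ)/((k:ℚ)-1) := by
      rw [le_div_iff₀ hpos]; linarith
    rw [mul_one_div]; linarith
  have h3 : (1:ℚ) + 1/((k:ℚ)-1) = (k:ℚ)/((k:ℚ)-1) := by field_simp; ring
  have h1 : (2:ℚ) ≤ ((k:ℚ)/((k:ℚ)-1))^k := by
    calc (2:ℚ) ≤ 1 + (k:ℚ) * (1/((k:ℚ)-1)) := h2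
      _ ≤ (1 + 1/((k:ℚ)-1))^k := hb
      _ = ((k:ℚ)/((k:ℚ)-1))^k := by rw [h3]
  have hpow : (0:ℚ) < ((k:ℚ)-1)^k := by positivity
  have h4 : (2:ℚ) * ((k:ℚ)-1)^k ≤ (k:ℚ)^k := by
    rw [div_pow] at h1
    have := mul_le_mul_of_nonneg_right h1 (le_of_lt hpow)
    calc (2:ℚ) * ((k:ℚ)-1)^k ≤ ((k:ℚ)^k/((k:ℚ)-1)^k) * ((k:ℚ)-1)^k := this
      _ = (k:ℚ)^k := div_mul_cancel₀ _ (ne_of_gt hpow)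
  have hcast : ((k:ℚ) - 1) = ((k-1 : ℕ) : ℚ) := by
    rw [Nat.cast_sub (by omega : 1 ≤ k)]; push_cast; ring
  rw [hcast] at h4
  exact_mod_cast h4

lemma bern_pow {k : ℕ} (J : ℕ) (hk : 2 ≤ k) : 2^J * (k-1)^(k*J) ≤ k^(k*J) := by
  calc 2^J * (k-1)^(k*J) = (2 * (k-1)^k)^J := by
        rw [mul_pow, ← pow_mul]
    _ ≤ (k^k)^J := Nat.pow_le_pow_left (bernoulli_nat hk) J
    _ = k^(k*J) := by rw [← pow_mul]

lemma two_pow_lower {L : ℕ} (hL : 10 ≤ L) : 24 * L + 9 ≤ 2^L := by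
  induction L, hL using Nat.le_induction with
  | base => norm_num
  | succ L hL ih =>
    have : 2^(L+1) = 2 * 2^L := by rw [pow_succ]; ring
    omega

lemma a_le_m {L : ℕ} (hL : 10 ≤ L) : 8 * 4^L * (3*L+1) + 1 ≤ 8^L := by
  have h1 : 24 * L + 9 ≤ 2^L := two_pow_lower hL
  have h2 : 8 * 4^L * (3*L+1) + 1 ≤ 4^L * (24*L+9) := by
    have h3 : 1 ≤ 4^L := Nat.one_le_pow _ _ (by norm_num)
    nlinarith
  calc 8 * 4^L * (3*L+1) + 1 ≤ 4^L * (24*L+9) := h2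
    _ ≤ 4^L * 2^L := Nat.mul_le_mul_left _ h1
    _ = 8^L := by rw [← Nat.mul_pow]

/-- The Ramsey gadget: a triangle-free graph on `Fin s₀`, `s₀ ≥ 8^L/2`, with
independence number less than `a L`. -/
lemma gadget_numeric (L : ℕ) (hL : 10 ≤ L) :
    ∃ s₀ : ℕ, 8^L / 2 ≤ s₀ ∧ ∃ H : SimpleGraph (Fin s₀),
      (∀ x y z : Fin s₀, x ≠ y → x ≠ z → y ≠ z → ¬(H.Adj x y ∧ H.Adj x z ∧ H.Adj y z)) ∧
      (∀ S : Finset (Fin s₀), (∀ u ∈ S, ∀ v ∈ S, u ≠ v → ¬H.Adj u v) →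
        S.card < 8 * 4^L * (3*L+1) + 1) := by
  set m := 8^L with hm
  set k := 2 * 4^L with hkdef
  set a := 8 * 4^L * (3*L+1) + 1 with hadef
  set Ca := a * (4 * 4^L * (3*L+1)) with hCadef
  have h4pos : 1 ≤ 4^L := Nat.one_le_pow _ _ (by norm_num)
  haveI : NeZero k := ⟨by omega⟩
  have hk : 2 ≤ k := by omega
  have hm3 : 3 ≤ m := by
    have h8 : 8^1 ≤ 8^L := Nat.pow_le_pow_right (by norm_num) (by omega)
    omega
  have hb : 1 ≤ 8 * 4^L * (3*L+1) := Nat.one_le_iff_ne_zero.2 (by positivity)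
  have ha : 2 ≤ a := by omega
  have haM : a ≤ m := a_le_m hL
  have hCa : 2 * Ca = a * a - a := by
    have h0 : a - 1 = 8 * 4^L * (3*L+1) := by omega
    have h1 : a * (a - 1) = a * a - a := by
      rw [Nat.mul_sub, mul_one]
    calc 2 * Ca = a * (8 * 4^L * (3*L+1)) := by rw [hCadef]; ring
      _ = a * (a - 1) := by rw [h0]
      _ = a * a - a := h1
  have hCaN : Ca ≤ m * m := by
    have h1 : 4 * 4^L * (3*L+1) ≤ a := by nlinarith
    calc Ca = a * (4 * 4^L * (3*L+1)) := hCadef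
      _ ≤ a * a := Nat.mul_le_mul_left a h1
      _ ≤ m * m := Nat.mul_le_mul haM haM
  have hk3 : k ^ 3 = 8 * (m * m) := by
    have h1 : k ^ 3 = 8 * (4^L)^3 := by rw [hkdef, mul_pow]; norm_num
    have h2 : ((4:ℕ)^L)^3 = 64^L := by
      rw [← pow_mul, mul_comm L 3, pow_mul]
      norm_num
    have h3 : m * m = 64^L := by rw [hm, ← Nat.mul_pow]
    rw [h1, h2, h3]
  have hdvd2 : 2 ∣ m := by
    rw [hm]
    exact dvd_pow (by norm_num) (by omega)
  have hM2 : 2 * (m / 2) = m := Nat.mul_div_cancel' hdvd2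
  have hb1 : 24 * m.choose 3 ≤ (m / 2) * k ^ 3 := by
    have hdvd : Nat.factorial 3 ∣ m.descFactorial 3 := Nat.factorial_dvd_descFactorial m 3
    have hd6 : 6 ∣ m.descFactorial 3 := by
      have h6 : Nat.factorial 3 = 6 := by norm_num [Nat.factorial]
      rwa [h6] at hdvd
    have hch : m.choose 3 = m.descFactorial 3 / 6 := by
      rw [Nat.choose_eq_descFactorial_div_factorial]
      norm_num [Nat.factorial]
    have h24 : 24 * m.choose 3 = 4 * m.descFactorial 3 := by
      rw [hch]
      obtain ⟨c, hc⟩ := hd6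
      rw [hc, Nat.mul_div_cancel_left c (by norm_num)]
      ring
    have hdesc : m.descFactorial 3 ≤ m ^ 3 := Nat.descFactorial_le_pow m 3
    have hrhs : (m / 2) * k ^ 3 = 4 * (m * (m * m)) := by
      rw [hk3]
      calc (m / 2) * (8 * (m * m)) = (2 * (m / 2)) * (4 * (m * m)) := by ring
        _ = m * (4 * (m * m)) := by rw [hM2]
        _ = 4 * (m * (m * m)) := by ring
    rw [h24, hrhs]
    have : m ^ 3 = m * (m * m) := by ring
    rw [this] at hdesc
    omega
  have hb2 : 4 * (m.choose a * (k-1) ^ Ca) ≤ k ^ Ca := by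
    have hJ : Ca = k * (2 * a * (3*L+1)) := by rw [hCadef, hkdef]; ring
    have hbp := bern_pow (k := k) (2 * a * (3*L+1)) hk
    rw [← hJ] at hbp
    have hC : m.choose a ≤ m ^ a := Nat.choose_le_pow m a
    have hma : m ^ a = 2 ^ (3 * L * a) := by
      rw [hm, show (8:ℕ) = 2^3 by norm_num, ← pow_mul, ← pow_mul]
      congr 1
      ring
    have h4C : 4 * m.choose a ≤ 2 ^ (2 * a * (3*L+1)) := by
      calc 4 * m.choose a ≤ 4 * 2 ^ (3 * L * a) := by
            rw [hma] at hC
            exact Nat.mul_le_mul_left 4 hC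
        _ = 2 ^ (3 * L * a + 2) := by rw [pow_add]; ring
        _ ≤ 2 ^ (2 * a * (3*L+1)) := by
            apply Nat.pow_le_pow_right (by norm_num)
            nlinarith
    calc 4 * (m.choose a * (k-1) ^ Ca) = (4 * m.choose a) * (k-1) ^ Ca := by ring
      _ ≤ 2 ^ (2 * a * (3*L+1)) * (k-1) ^ Ca := Nat.mul_le_mul_right _ h4C
      _ ≤ k ^ Ca := hbp
  obtain ⟨s₀, hs₀, H, hH1, hH2⟩ :=
    gadget_abstract (m := m) (k := k) a Ca hk hm3 ha hCa hCaN hb1 hb2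
  exact ⟨s₀, hs₀, H, hH1, fun S hS => hH2 S hS⟩

/-! ### The 6-part pattern -/

def rpl : List (ℕ × ℕ) := [(1,2),(2,3),(3,4),(4,5),(1,5)]
def bpl : List (ℕ × ℕ) := [(0,1),(0,2),(0,3),(0,4),(0,5),(1,3),(1,4),(2,4),(2,5),(3,5)]

def rp (p q : ℕ) : Prop := (p,q) ∈ rpl ∨ (q,p) ∈ rpl
def bp (p q : ℕ) : Prop := (p,q) ∈ bpl ∨ (q,p) ∈ bpl

instance (p q : ℕ) : Decidable (rp p q) := by unfold rp; infer_instance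
instance (p q : ℕ) : Decidable (bp p q) := by unfold bp; infer_instance

lemma rp_symm {p q : ℕ} (h : rp p q) : rp q p := h.elim Or.inr Or.inl
lemma bp_symm {p q : ℕ} (h : bp p q) : bp q p := h.elim Or.inr Or.inl

lemma f1 : ∀ p q : Fin 6, p ≠ q → (rp p.val q.val ∨ bp p.val q.val) := by decide
lemma f2 : ∀ p q : Fin 6, ¬(rp p.val q.val ∧ bp p.val q.val) := by decide
lemma f3 : ∀ p q r : Fin 6, p ≠ q → p ≠ r → q ≠ r →
    ¬(rp p.val q.val ∧ rp p.val r.val ∧ rp q.val r.val) := by decide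
lemma f4 : ∀ p q : Fin 6, rp p.val q.val → p.val ≠ 0 ∧ q.val ≠ 0 ∧ p ≠ q := by decide
lemma f5 : ∀ p q : Fin 6, bp p.val q.val → p ≠ q := by decide
lemma f6 : ∀ P : Finset (Fin 6), (∀ p ∈ P, ∀ q ∈ P, p ≠ q → bp p.val q.val) →
    (∑ p ∈ P, (if p.val = 0 then 1 else 2)) ≤ 5 := by decide

/-! ### The construction on `Fin n` -/

section Construction

variable {n s₀ : ℕ} (hs : 0 < s₀) (H : SimpleGraph (Fin s₀))

/-- part of a vertex -/
def pt (u : Fin n) : ℕ := u.val % 6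

lemma pt_lt (u : Fin n) : pt u < 6 := Nat.mod_lt _ (by norm_num)

/-- block of a vertex (inside its part) -/
def blk (s₀ : ℕ) (u : Fin n) : ℕ := u.val / 6 / s₀

/-- residue of a vertex (inside its block) -/
def res (u : Fin n) : Fin s₀ := ⟨u.val / 6 % s₀, Nat.mod_lt _ hs⟩

lemma vertex_inj {u v : Fin n} (h1 : pt u = pt v) (h2 : blk s₀ u = blk s₀ v)
    (h3 : res hs u = res hs v) : u = v := by
  have e1 := Nat.div_add_mod u.val 6
  have e2 := Nat.div_add_mod v.val 6
  have e3 := Nat.div_add_mod (u.val / 6) s₀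
  have e4 := Nat.div_add_mod (v.val / 6) s₀
  have h3' : u.val / 6 % s₀ = v.val / 6 % s₀ := congrArg Fin.val h3
  unfold pt at h1
  unfold blk at h2
  have e5 : s₀ * (u.val / 6 / s₀) = s₀ * (v.val / 6 / s₀) := by rw [h2]
  apply Fin.ext
  omega

/-- inner adjacency -/
def inner (u v : Fin n) : Prop :=
  pt u = pt v ∧ blk s₀ u = blk s₀ v ∧ H.Adj (res hs u) (res hs v)

lemma inner_irrefl (u : Fin n) : ¬ inner hs H u u := fun h => H.irrefl h.2.2

/-- the red graph -/
def red : SimpleGraph (Fin n) where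
  Adj u v := rp (pt u) (pt v) ∨ (pt u = 0 ∧ inner hs H u v)
  symm := by
    constructor
    rintro u v (h | ⟨h0, h1, h2, h3⟩)
    · exact Or.inl (rp_symm h)
    · exact Or.inr ⟨h1 ▸ h0, h1.symm, h2.symm, H.adj_symm h3⟩
  loopless := by
    constructor
    rintro u (h | ⟨-, h⟩)
    · exact (f4 ⟨pt u, pt_lt u⟩ ⟨pt u, pt_lt u⟩ h).2.2 rfl
    · exact inner_irrefl hs H u h

/-- the blue graph -/
def blue : SimpleGraph (Fin n) where
  Adj u v := bp (pt u) (pt v) ∨ (pt u ≠ 0 ∧ inner hs H u v)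
  symm := by
    constructor
    rintro u v (h | ⟨h0, h1, h2, h3⟩)
    · exact Or.inl (bp_symm h)
    · exact Or.inr ⟨h1 ▸ h0, h1.symm, h2.symm, H.adj_symm h3⟩
  loopless := by
    constructor
    rintro u (h | ⟨-, h⟩)
    · exact f5 ⟨pt u, pt_lt u⟩ ⟨pt u, pt_lt u⟩ h rfl
    · exact inner_irrefl hs H u h

lemma red_cliqueFree
    (hH1 : ∀ x y z : Fin s₀, x ≠ y → x ≠ z → y ≠ z → ¬(H.Adj x y ∧ H.Adj x z ∧ H.Adj y z)) :
    (red hs H : SimpleGraph (Fin n)).CliqueFree 3 := by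
  intro t ht
  obtain ⟨hclq, hcard⟩ := ht
  obtain ⟨x, y, z, hxy, hxz, hyz, rfl⟩ := Finset.card_eq_three.1 hcard
  have a12 : (red hs H).Adj x y := hclq (by simp) (by simp) hxy
  have a13 : (red hs H).Adj x z := hclq (by simp) (by simp) hxz
  have a23 : (red hs H).Adj y z := hclq (by simp) (by simp) hyz
  rcases a12 with c12 | ⟨h120, i12⟩
  · rcases a13 with c13 | ⟨h130, i13⟩
    · rcases a23 with c23 | ⟨h230, i23⟩
      · -- all cross: triangle in C₅
        have hpq : (⟨pt x, pt_lt x⟩ : Fin 6) ≠ ⟨pt y, pt_lt y⟩ := by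
          intro h
          exact ((f4 _ _ c12).2.2) (by exact h)
        have hpr : (⟨pt x, pt_lt x⟩ : Fin 6) ≠ ⟨pt z, pt_lt z⟩ := by
          intro h
          exact ((f4 _ _ c13).2.2) (by exact h)
        have hqr : (⟨pt y, pt_lt y⟩ : Fin 6) ≠ ⟨pt z, pt_lt z⟩ := by
          intro h
          exact ((f4 _ _ c23).2.2) (by exact h)
        exact f3 ⟨pt x, pt_lt x⟩ ⟨pt y, pt_lt y⟩ ⟨pt z, pt_lt z⟩ hpq hpr hqr ⟨c12, c13, c23⟩
      · -- y inner with z, but x–y cross: pt y = 0 contradicts rp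
        exact (f4 ⟨pt x, pt_lt x⟩ ⟨pt y, pt_lt y⟩ c12).2.1 h230
    · -- x inner with z, but x–y cross
      exact (f4 ⟨pt x, pt_lt x⟩ ⟨pt y, pt_lt y⟩ c12).1 h130
  · rcases a13 with c13 | ⟨h130, i13⟩
    · exact (f4 ⟨pt x, pt_lt x⟩ ⟨pt z, pt_lt z⟩ c13).1 h120
    · rcases a23 with c23 | ⟨h230, i23⟩
      · have : pt y = 0 := i12.1 ▸ h120
        exact (f4 ⟨pt y, pt_lt y⟩ ⟨pt z, pt_lt z⟩ c23).1 this
      · -- all inner: triangle in H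
        have hrxy : res hs x ≠ res hs y :=
          fun h => hxy (vertex_inj hs i12.1 i12.2.1 h)
        have hrxz : res hs x ≠ res hs z :=
          fun h => hxz (vertex_inj hs i13.1 i13.2.1 h)
        have hryz : res hs y ≠ res hs z :=
          fun h => hyz (vertex_inj hs i23.1 i23.2.1 h)
        exact hH1 _ _ _ hrxy hrxz hryz ⟨i12.2.2, i13.2.2, i23.2.2⟩

lemma blue_cliqueFree
    (hH1 : ∀ x y z : Fin s₀, x ≠ y → x ≠ z → y ≠ z → ¬(H.Adj x y ∧ H.Adj x z ∧ H.Adj y z)) :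
    (blue hs H : SimpleGraph (Fin n)).CliqueFree 6 := by
  intro t ht
  obtain ⟨hclq, hcard⟩ := ht
  set f : Fin n → Fin 6 := fun u => ⟨pt u, pt_lt u⟩ with hf
  set P := t.image f with hP
  have hPclq : ∀ p ∈ P, ∀ q ∈ P, p ≠ q → bp p.val q.val := by
    intro p hp q hq hpq
    obtain ⟨u, hu, rfl⟩ := Finset.mem_image.1 hp
    obtain ⟨v, hv, rfl⟩ := Finset.mem_image.1 hq
    have huv : u ≠ v := fun h => hpq (by rw [h])
    have hadj := hclq (Finset.mem_coe.2 hu) (Finset.mem_coe.2 hv) huv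
    rcases hadj with c | ⟨h0, i⟩
    · exact c
    · exact absurd (Fin.ext i.1 : f u = f v) hpq
  have hfib : ∀ p ∈ P, (t.filter (fun u => f u = p)).card ≤ (if p.val = 0 then 1 else 2) := by
    intro p hp
    by_cases hp0 : p.val = 0
    · rw [if_pos hp0]
      by_contra hgt
      push_neg at hgt
      obtain ⟨u, hu, v, hv, huv⟩ := Finset.one_lt_card.1 hgt
      have hu' := Finset.mem_filter.1 hu
      have hv' := Finset.mem_filter.1 hv
      have hadj := hclq (Finset.mem_coe.2 hu'.1) (Finset.mem_coe.2 hv'.1) huv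
      have hptu : pt u = p.val := congrArg Fin.val hu'.2
      have hptv : pt v = p.val := congrArg Fin.val hv'.2
      rcases hadj with c | ⟨h0, i⟩
      · refine f5 ⟨pt u, pt_lt u⟩ ⟨pt v, pt_lt v⟩ c ?_
        exact Fin.ext (hptu.trans hptv.symm)
      · exact h0 (hptu.trans hp0)
    · rw [if_neg hp0]
      by_contra hgt
      push_neg at hgt
      obtain ⟨u, hu, v, hv, w, hw, huv, huw, hvw⟩ := Finset.two_lt_card.1 hgt
      have hu' := Finset.mem_filter.1 hu
      have hv' := Finset.mem_filter.1 hv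
      have hw' := Finset.mem_filter.1 hw
      have hinner : ∀ x₁ x₂ : Fin n, x₁ ∈ t.filter (fun u => f u = p) →
          x₂ ∈ t.filter (fun u => f u = p) → x₁ ≠ x₂ → inner hs H x₁ x₂ := by
        intro x₁ x₂ hx₁ hx₂ hne
        have hx₁' := Finset.mem_filter.1 hx₁
        have hx₂' := Finset.mem_filter.1 hx₂
        have hadj := hclq (Finset.mem_coe.2 hx₁'.1) (Finset.mem_coe.2 hx₂'.1) hne
        rcases hadj with c | ⟨h0, i⟩
        · exact absurd (hx₁'.2.trans hx₂'.2.symm)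
            (f5 ⟨pt x₁, pt_lt x₁⟩ ⟨pt x₂, pt_lt x₂⟩ c)
        · exact i
      have iuv := hinner u v hu hv huv
      have iuw := hinner u w hu hw huw
      have ivw := hinner v w hv hw hvw
      have hr1 : res hs u ≠ res hs v := fun h => huv (vertex_inj hs iuv.1 iuv.2.1 h)
      have hr2 : res hs u ≠ res hs w := fun h => huw (vertex_inj hs iuw.1 iuw.2.1 h)
      have hr3 : res hs v ≠ res hs w := fun h => hvw (vertex_inj hs ivw.1 ivw.2.1 h)
      exact hH1 _ _ _ hr1 hr2 hr3 ⟨iuv.2.2, iuw.2.2, ivw.2.2⟩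
  have hsum : t.card = ∑ p ∈ P, (t.filter (fun u => f u = p)).card :=
    Finset.card_eq_sum_card_fiberwise (fun x hx => Finset.mem_image_of_mem f hx)
  have hle : ∑ p ∈ P, (t.filter (fun u => f u = p)).card
      ≤ ∑ p ∈ P, (if p.val = 0 then 1 else 2) := Finset.sum_le_sum hfib
  have h5 := f6 P hPclq
  omega

lemma red_blue_disjoint : (red hs H : SimpleGraph (Fin n)) ⊓ blue hs H = ⊥ := by
  ext u v
  simp only [SimpleGraph.inf_adj, SimpleGraph.bot_adj, iff_false, not_and]
  intro hr hb
  rcases hr with c | ⟨h0, i⟩ <;> rcases hb with c' | ⟨h0', i'⟩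
  · exact f2 ⟨pt u, pt_lt u⟩ ⟨pt v, pt_lt v⟩ ⟨c, c'⟩
  · exact (f4 ⟨pt u, pt_lt u⟩ ⟨pt v, pt_lt v⟩ c).2.2 (Fin.ext i'.1)
  · exact f5 ⟨pt u, pt_lt u⟩ ⟨pt v, pt_lt v⟩ c' (Fin.ext i.1)
  · exact h0' h0

lemma cross_adj {u v : Fin n} (h : pt u ≠ pt v) :
    ((red hs H : SimpleGraph (Fin n)) ⊔ blue hs H).Adj u v := by
  have hne : (⟨pt u, pt_lt u⟩ : Fin 6) ≠ ⟨pt v, pt_lt v⟩ := fun hh => h (congrArg Fin.val hh)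
  rw [SimpleGraph.sup_adj]
  rcases f1 _ _ hne with hr | hb
  · exact Or.inl (Or.inl hr)
  · exact Or.inr (Or.inl hb)

lemma indep_bound (a : ℕ)
    (hH2 : ∀ S : Finset (Fin s₀), (∀ u ∈ S, ∀ v ∈ S, u ≠ v → ¬H.Adj u v) → S.card < a)
    (S : Finset (Fin n))
    (hS : ∀ u ∈ S, ∀ v ∈ S, u ≠ v → ¬((red hs H : SimpleGraph (Fin n)) ⊔ blue hs H).Adj u v) :
    S.card ≤ a * ((n-1) / (6 * s₀) + 1) := by
  classical
  have hfib : ∀ b ∈ S.image (blk s₀), (S.filter (fun u => blk s₀ u = b)).card ≤ a := by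
    intro b hb
    set F := S.filter (fun u => blk s₀ u = b) with hF
    -- the residues of F form an independent set in H
    have hsame : ∀ u ∈ F, ∀ v ∈ F, u ≠ v → pt u = pt v := by
      intro u hu v hv huv
      by_contra hne
      exact hS u (Finset.mem_filter.1 hu).1 v (Finset.mem_filter.1 hv).1 huv
        (cross_adj hs H hne)
    have hres : ∀ u ∈ F, ∀ v ∈ F, u ≠ v → ¬H.Adj (res hs u) (res hs v) := by
      intro u hu v hv huv hadj
      have hb1 : blk s₀ u = b := (Finset.mem_filter.1 hu).2
      have hb2 : blk s₀ v = b := (Finset.mem_filter.1 hv).2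
      have hin : inner hs H u v := ⟨hsame u hu v hv huv, hb1.trans hb2.symm, hadj⟩
      apply hS u (Finset.mem_filter.1 hu).1 v (Finset.mem_filter.1 hv).1 huv
      rw [SimpleGraph.sup_adj]
      by_cases h0 : pt u = 0
      · exact Or.inl (Or.inr ⟨h0, hin⟩)
      · exact Or.inr (Or.inr ⟨h0, hin⟩)
    have hinj : Set.InjOn (res hs) (F : Set (Fin n)) := by
      intro u hu v hv h
      by_contra hne
      have h1 : pt u = pt v := hsame u hu v hv hne
      have h2 : blk s₀ u = blk s₀ v :=
        ((Finset.mem_filter.1 hu).2).trans ((Finset.mem_filter.1 hv).2).symm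
      exact hne (vertex_inj hs h1 h2 h)
    have himg : ∀ u' ∈ F.image (res hs), ∀ v' ∈ F.image (res hs), u' ≠ v' → ¬H.Adj u' v' := by
      intro u' hu' v' hv' hne
      obtain ⟨u, hu, rfl⟩ := Finset.mem_image.1 hu'
      obtain ⟨v, hv, rfl⟩ := Finset.mem_image.1 hv'
      have huv : u ≠ v := fun h => hne (by rw [h])
      exact hres u hu v hv huv
    have hcard : (F.image (res hs)).card = F.card := Finset.card_image_of_injOn hinj
    have := hH2 (F.image (res hs)) himg
    omega
  have h1 : S.card ≤ a * (S.image (blk s₀)).card :=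
    Finset.card_le_mul_card_image S a hfib
  have h2 : (S.image (blk s₀)).card ≤ (n-1) / (6 * s₀) + 1 := by
    apply le_trans (Finset.card_le_card (t := Finset.range ((n-1) / (6 * s₀) + 1)) ?_)
    · rw [Finset.card_range]
    · intro b hb
      obtain ⟨u, hu, rfl⟩ := Finset.mem_image.1 hb
      rw [Finset.mem_range, Nat.lt_succ_iff]
      unfold blk
      rw [Nat.div_div_eq_div_mul]
      exact Nat.div_le_div_right (by omega)
  calc S.card ≤ a * (S.image (blk s₀)).card := h1
    _ ≤ a * ((n-1) / (6 * s₀) + 1) := Nat.mul_le_mul_left a h2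

/-- the complete 6-partite graph -/
def crossG (n : ℕ) : SimpleGraph (Fin n) where
  Adj u v := pt u ≠ pt v
  symm := ⟨fun _ _ h => h.symm⟩
  loopless := ⟨fun _ h => h rfl⟩

instance (n : ℕ) : DecidableRel (crossG n).Adj :=
  fun u v => inferInstanceAs (Decidable (pt u ≠ pt v))

lemma crossG_le : crossG n ≤ (red hs H : SimpleGraph (Fin n)) ⊔ blue hs H := by
  intro u v h
  exact cross_adj hs H h

lemma class_card (n j : ℕ) :
    ((univ : Finset (Fin n)).filter (fun u => pt u = j)).card ≤ n / 6 + 1 := by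
  have hmaps : ∀ u ∈ (univ : Finset (Fin n)).filter (fun u => pt u = j),
      u.val / 6 ∈ Finset.range (n / 6 + 1) := by
    intro u hu
    rw [Finset.mem_range, Nat.lt_succ_iff]
    exact Nat.div_le_div_right (le_of_lt u.isLt)
  have hinj : Set.InjOn (fun u : Fin n => u.val / 6)
      (((univ : Finset (Fin n)).filter (fun u => pt u = j)) : Set (Fin n)) := by
    intro u hu v hv h
    simp only [Finset.coe_filter, Set.mem_setOf_eq] at hu hv
    have e1 := Nat.div_add_mod u.val 6
    have e2 := Nat.div_add_mod v.val 6
    have hp : pt u = pt v := hu.2.trans hv.2.symm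
    unfold pt at hp
    simp only at h
    apply Fin.ext
    omega
  calc ((univ : Finset (Fin n)).filter (fun u => pt u = j)).card
      ≤ (Finset.range (n / 6 + 1)).card :=
        Finset.card_le_card_of_injOn _ hmaps hinj
    _ = n / 6 + 1 := Finset.card_range _

lemma crossG_degree (n : ℕ) (v : Fin n) :
    n ≤ (crossG n).degree v + (n / 6 + 1) := by
  classical
  have hdeg : (crossG n).degree v
      = ((univ : Finset (Fin n)).filter (fun u => (crossG n).Adj v u)).card := by
    rw [← SimpleGraph.neighborFinset_eq_filter]
    rfl
  have hsplit := Finset.card_filter_add_card_filter_not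
    (s := (univ : Finset (Fin n))) (fun u => (crossG n).Adj v u)
  have hneg : ((univ : Finset (Fin n)).filter (fun u => ¬(crossG n).Adj v u)).card
      ≤ n / 6 + 1 := by
    have hcong : (univ : Finset (Fin n)).filter (fun u => ¬(crossG n).Adj v u)
        = (univ : Finset (Fin n)).filter (fun u => pt u = pt v) := by
      apply Finset.filter_congr
      intro u _
      constructor
      · intro h
        have := not_not.1 h
        exact this.symm
      · intro h h'
        exact h' h.symm
    rw [hcong]
    exact class_card n (pt v)
  have hcu : (univ : Finset (Fin n)).card = n := by
    rw [Finset.card_univ, Fintype.card_fin]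
  omega

lemma crossG_edges (n : ℕ) :
    n * (n - (n / 6 + 1)) ≤ 2 * (crossG n).edgeFinset.card := by
  classical
  have hhand := SimpleGraph.sum_degrees_eq_twice_card_edges (crossG n)
  have hsum : (univ : Finset (Fin n)).card • (n - (n / 6 + 1))
      ≤ ∑ v : Fin n, (crossG n).degree v := by
    apply Finset.card_nsmul_le_sum
    intro v _
    have := crossG_degree n v
    omega
  rw [Finset.card_univ, Fintype.card_fin, smul_eq_mul] at hsum
  omega

end Construction


lemma Lsq : ∀ L : ℕ, 4 ≤ L → L * L ≤ 2^L := by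
  intro L hL
  induction L, hL using Nat.le_induction with
  | base => norm_num
  | succ L hL ih =>
    have h2 : 2*L+1 ≤ L*L := by nlinarith
    have h3 : (2:ℕ)^(L+1) = 2*2^L := by rw [pow_succ]; ring
    nlinarith

lemma growth (c : ℕ) : ∃ L : ℕ, 10 ≤ L ∧ c * (192*L + 72) ≤ 2^L := by
  refine ⟨264 * (c + 1), by omega, ?_⟩
  have h1 : (264 * (c + 1)) * (264 * (c + 1)) ≤ 2^(264 * (c + 1)) := Lsq _ (by omega)
  have h2 : c * (192*(264 * (c + 1)) + 72) ≤ (264 * (c + 1)) * (264 * (c + 1)) := by nlinarith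
  exact le_trans h2 h1

lemma ncard_mono_graphs {n : ℕ} {G G' : SimpleGraph (Fin n)} (h : G ≤ G') :
    G.edgeSet.ncard ≤ G'.edgeSet.ncard :=
  Set.ncard_le_ncard (SimpleGraph.edgeSet_mono h) (Set.toFinite _)

lemma crossG_edges_real (n : ℕ) (hn2 : 2 ≤ n) :
    (5:ℝ)/12 * (n:ℝ)^2 - (n:ℝ)/2 ≤ (((crossG n).edgeSet.ncard : ℕ) : ℝ) := by
  classical
  have h3 := crossG_edges n
  have h2 : (crossG n).edgeSet.ncard = (crossG n).edgeFinset.card := by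
    rw [← SimpleGraph.coe_edgeFinset, Set.ncard_coe_finset]
  set c6 := n / 6 with hc6
  have hc61 : c6 + 1 ≤ n := by omega
  have h4 : (n:ℝ) * ((n:ℝ) - c6 - 1) ≤ 2 * ((crossG n).edgeFinset.card : ℝ) := by
    have hcast : ((n * (n - (c6+1)) : ℕ) : ℝ) = (n:ℝ) * ((n:ℝ) - c6 - 1) := by
      push_cast [Nat.cast_sub hc61]
      ring
    calc (n:ℝ) * ((n:ℝ) - c6 - 1) = ((n * (n - (c6+1)) : ℕ) : ℝ) := hcast.symm
      _ ≤ ((2 * (crossG n).edgeFinset.card : ℕ) : ℝ) := by exact_mod_cast h3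
      _ = 2 * ((crossG n).edgeFinset.card : ℝ) := by push_cast; ring
  have hc6R : (c6:ℝ) ≤ (n:ℝ)/6 := by
    rw [hc6]
    exact_mod_cast Nat.cast_div_le
  rw [h2]
  nlinarith [h4, hc6R, (by positivity : (0:ℝ) ≤ (n:ℝ))]

end RT36

set_option maxHeartbeats 1600000 in
open RT36 in
/-- Lower bound half of ρ(3,6) = 5/12: for every ε > 0 and δ > 0 there is N such that
for every n ≥ N there is an n-vertex graph with independence number at most δn whose
edges can be 2-colored with no red K₃ and no blue K₆, having at least (5/12 − ε)n² edges. -/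
theorem rt_3_6_lower :
    ∀ ε : ℝ, 0 < ε → ∀ δ : ℝ, 0 < δ → ∃ N : ℕ, 0 < N ∧
      ∀ n : ℕ, N ≤ n → ∃ G : SimpleGraph (Fin n),
        (∀ s : Finset (Fin n),
            (∀ x ∈ s, ∀ y ∈ s, x ≠ y → ¬ G.Adj x y) → (s.card : ℝ) ≤ δ * n) ∧
        (∃ E₁ E₂ : SimpleGraph (Fin n),
            E₁ ⊔ E₂ = G ∧ E₁ ⊓ E₂ = ⊥ ∧ E₁.CliqueFree 3 ∧ E₂.CliqueFree 6) ∧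
        (5 / 12 - ε) * n ^ 2 ≤ (G.edgeSet.ncard : ℝ) := by
  intro ε hε δ hδ
  classical
  obtain ⟨c, hc⟩ := exists_nat_gt (1/δ)
  have hcpos : (0:ℝ) < c := lt_trans (by positivity) hc
  obtain ⟨L, hL10, hLg⟩ := growth c
  obtain ⟨s₀, hs₀big, H, hH1, hH2⟩ := gadget_numeric L hL10
  set a := 8 * 4^L * (3*L+1) + 1 with ha
  have h4pos : 1 ≤ 4^L := Nat.one_le_pow _ _ (by norm_num)
  have h8big : 8 ≤ 8^L := by
    calc (8:ℕ) = 8^1 := by norm_num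
      _ ≤ 8^L := Nat.pow_le_pow_right (by norm_num) (by omega)
  have hs : 0 < s₀ := by omega
  have hdvd2 : 2 ∣ 8^L := dvd_pow (by norm_num) (by omega)
  have h8s : (8:ℕ)^L ≤ 2 * s₀ := by omega
  -- key real bound : a ≤ (δ/4) s₀
  have haR : (a:ℝ) ≤ (4:ℝ)^L * (24*L + 9) := by
    have h1 : (a:ℕ) ≤ 4^L * (24*L+9) := by nlinarith
    calc (a:ℝ) ≤ ((4^L * (24*L+9) : ℕ) : ℝ) := by exact_mod_cast h1
      _ = (4:ℝ)^L * (24*L + 9) := by push_cast; ring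
  have hgR : (192*L + 72 : ℝ) ≤ δ * 2^L := by
    have h1 : (c:ℝ) * (192*L + 72) ≤ 2^L := by exact_mod_cast hLg
    have h2 : 1/(c:ℝ) ≤ δ := by
      rw [div_le_iff₀ hcpos]
      rw [div_lt_iff₀ hδ] at hc
      linarith [mul_comm δ (c:ℝ)]
    have h3 : (192*L + 72 : ℝ) ≤ 2^L / c := by
      rw [le_div_iff₀ hcpos]
      linarith [mul_comm (c:ℝ) (192*L+72:ℝ)]
    calc (192*L + 72 : ℝ) ≤ 2^L / c := h3
      _ = 2^L * (1/c) := by ring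
      _ ≤ 2^L * δ := by
          apply mul_le_mul_of_nonneg_left h2 (by positivity)
      _ = δ * 2^L := by ring
  have hkey : (a:ℝ) ≤ (δ/4) * s₀ := by
    have hsR : (8:ℝ)^L ≤ 2 * s₀ := by exact_mod_cast h8s
    have h84 : (8:ℝ)^L = 4^L * 2^L := by
      rw [← mul_pow]; norm_num
    have h4Lpos : (0:ℝ) < 4^L := by positivity
    calc (a:ℝ) ≤ (4:ℝ)^L * (24*L + 9) := haR
      _ ≤ (4:ℝ)^L * (δ * 2^L) / 8 := by
          rw [mul_div_assoc]
          apply mul_le_mul_of_nonneg_left _ (le_of_lt h4Lpos)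
          linarith
      _ = (δ/4) * ((4:ℝ)^L * 2^L / 2) := by ring
      _ = (δ/4) * ((8:ℝ)^L / 2) := by rw [h84]
      _ ≤ (δ/4) * s₀ := by
          apply mul_le_mul_of_nonneg_left _ (by positivity)
          linarith
  obtain ⟨N₀, hN₀⟩ := exists_nat_gt (max (2*(a:ℝ)/δ) (1/ε))
  refine ⟨N₀ + 2, by omega, ?_⟩
  intro n hn
  have hn2 : 2 ≤ n := by omega
  have hnR : ((N₀:ℝ)) < n := by exact_mod_cast (by omega : N₀ < n)
  have hna : 2*(a:ℝ)/δ ≤ n := le_trans (le_trans (le_max_left _ _) (le_of_lt hN₀)) (le_of_lt hnR)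
  have hne : 1/ε ≤ n := le_trans (le_trans (le_max_right _ _) (le_of_lt hN₀)) (le_of_lt hnR)
  have hnpos : (0:ℝ) < n := by positivity
  refine ⟨(red hs H : SimpleGraph (Fin n)) ⊔ blue hs H, ?_, ?_, ?_⟩
  · -- independence
    intro S hS
    have h1 := indep_bound hs H a hH2 S hS
    set q := (n-1) / (6 * s₀) with hq
    have hq6 : q * (6 * s₀) ≤ n := le_trans (Nat.div_mul_le_self _ _) (by omega)
    have hqR : (q:ℝ) * (6 * s₀) ≤ n := by exact_mod_cast hq6
    have hcard : (S.card : ℝ) ≤ (a:ℝ) * q + a := by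
      have : (S.card : ℝ) ≤ ((a * (q+1) : ℕ) : ℝ) := by exact_mod_cast h1
      calc (S.card:ℝ) ≤ ((a * (q+1) : ℕ) : ℝ) := this
        _ = (a:ℝ) * q + a := by push_cast; ring
    have hqnn : (0:ℝ) ≤ (q:ℝ) := Nat.cast_nonneg q
    have hs₀R : (0:ℝ) < s₀ := by exact_mod_cast hs
    have h2 : (a:ℝ) * q ≤ ((δ/4) * s₀) * q :=
      mul_le_mul_of_nonneg_right hkey hqnn
    have h3 : ((δ/4) * s₀) * q ≤ (δ/4) * (n/6) := by
      have hxq : (s₀:ℝ) * q ≤ n/6 := by nlinarith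
      calc ((δ/4) * s₀) * q = (δ/4) * ((s₀:ℝ) * q) := by ring
        _ ≤ (δ/4) * (n/6) := mul_le_mul_of_nonneg_left hxq (by positivity)
    have h4 : (a:ℝ) ≤ δ * n / 2 := by
      rw [div_le_iff₀ hδ] at hna
      nlinarith
    have hδn : (0:ℝ) ≤ δ * n := mul_nonneg (le_of_lt hδ) (le_of_lt hnpos)
    have hrw : (δ/4) * ((n:ℝ)/6) = (δ * n)/24 := by ring
    calc (S.card : ℝ) ≤ (a:ℝ) * q + a := hcard
      _ ≤ (δ/4) * (n/6) + δ * n / 2 := by linarith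
      _ ≤ δ * n := by rw [hrw]; linarith
  · -- the coloring
    exact ⟨red hs H, blue hs H, rfl, red_blue_disjoint hs H,
      red_cliqueFree hs H hH1, blue_cliqueFree hs H hH1⟩
  · -- edge count
    have hbound := crossG_edges_real n hn2
    have h1 : (crossG n).edgeSet.ncard
        ≤ ((red hs H : SimpleGraph (Fin n)) ⊔ blue hs H).edgeSet.ncard :=
      ncard_mono_graphs (crossG_le hs H)
    have h1R : (((crossG n).edgeSet.ncard : ℕ) : ℝ)
        ≤ ((((red hs H : SimpleGraph (Fin n)) ⊔ blue hs H).edgeSet.ncard : ℕ) : ℝ) := by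
      exact_mod_cast h1
    have hεn : (1:ℝ) ≤ ε * n := by
      rw [div_le_iff₀ hε] at hne
      nlinarith
    have hstep : (5/12 - ε) * (n:ℝ)^2 ≤ (5:ℝ)/12 * (n:ℝ)^2 - (n:ℝ)/2 := by
      nlinarith
    linarith
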